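/- Let s, r, c, c₁, c₂ be positive integers, let R ∈ ℝ^{r×c} be a fixed (learned) shared-reference matrix, and let W_q, W_k ∈ ℝ^{c×c₁} and W_v ∈ ℝ^{c×c₂} be fixed weight matrices. For X ∈ ℝ^{s×c}, let X̃ ∈ ℝ^{(r+s)×c} denote the vertical concatenation of R on top of X, and define the softmax-normalized shared-reference attention operator A_R(X) = softmax((X·W_q) · (X̃·W_k)ᵀ) · (X̃·W_v), where softmax is applied row-wise: (softmax M)_{ij} = exp(M_{ij}) / ∑_k exp(M_{ik}). Then A_R is spatially permutation equivariant: for every permutation π of {1,…,s} with permutation matrix P_π ∈ ℝ^{s×s}, and every X ∈ ℝ^{s×c}, A_R(P_π·X) = P_π·A_R(X). -/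

import Mathlib

open Matrix

/-- The permutation matrix of a permutation `π`, whose `i`-th row is the
standard basis vector `e_{π i}`. -/
noncomputable def permMatrix {n : Type*} [DecidableEq n] (π : Equiv.Perm n) :
    Matrix n n ℝ :=
  Matrix.of fun i j => if π i = j then (1 : ℝ) else 0

/-- The row-wise softmax of a matrix:
`(softmax A) i j = exp (A i j) / ∑ k, exp (A i k)`. -/
noncomputable def softmax {m n : Type*} [Fintype n] (A : Matrix m n ℝ) :
    Matrix m n ℝ :=
  Matrix.of fun i j => Real.exp (A i j) / ∑ k, Real.exp (A i k)

/-- The softmax-normalized attention operator augmented with shared references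
`R`: with `X̃` the vertical concatenation of `R` on top of `X`,
`A_R(X) = softmax((X·W_q) · (X̃·W_k)ᵀ) · (X̃·W_v)`. -/
noncomputable def softmaxSharedRefAttn {s r c c₁ c₂ : ℕ}
    (R : Matrix (Fin r) (Fin c) ℝ)
    (Wq Wk : Matrix (Fin c) (Fin c₁) ℝ) (Wv : Matrix (Fin c) (Fin c₂) ℝ)
    (X : Matrix (Fin s) (Fin c) ℝ) : Matrix (Fin s) (Fin c₂) ℝ :=
  let Xt : Matrix (Fin r ⊕ Fin s) (Fin c) ℝ := Matrix.fromRows R X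
  softmax ((X * Wq) * (Xt * Wk)ᵀ) * (Xt * Wv)

/-- The softmax-normalized attention operator augmented with shared references
is spatially permutation equivariant. -/
theorem softmaxSharedRefAttn_permutation_equivariant
    (s r c c₁ c₂ : ℕ) (hs : 0 < s) (hr : 0 < r) (hc : 0 < c)
    (hc₁ : 0 < c₁) (hc₂ : 0 < c₂)
    (R : Matrix (Fin r) (Fin c) ℝ)
    (Wq Wk : Matrix (Fin c) (Fin c₁) ℝ) (Wv : Matrix (Fin c) (Fin c₂) ℝ)
    (π : Equiv.Perm (Fin s)) (X : Matrix (Fin s) (Fin c) ℝ) :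
    softmaxSharedRefAttn R Wq Wk Wv (permMatrix π * X) =
      permMatrix π * softmaxSharedRefAttn R Wq Wk Wv X := by
  have hperm : ∀ {m : ℕ} (Y : Matrix (Fin s) (Fin m) ℝ) (i : Fin s) (j : Fin m),
      (permMatrix π * Y) i j = Y (π i) j := by
    intro m Y i j
    simp [permMatrix, Matrix.mul_apply]
  set σ : Equiv.Perm (Fin r ⊕ Fin s) := Equiv.sumCongr (Equiv.refl (Fin r)) π with hσ
  have hXt : ∀ (j : Fin r ⊕ Fin s) (u : Fin c),
      Matrix.fromRows R (permMatrix π * X) j u = Matrix.fromRows R X (σ j) u := by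
    intro j u
    cases j with
    | inl a => simp [hσ, Matrix.fromRows_apply_inl]
    | inr b => simp [hσ, Matrix.fromRows_apply_inr, hperm]
  have hQ : ∀ (i : Fin s) (t : Fin c₁),
      ((permMatrix π * X) * Wq) i t = (X * Wq) (π i) t := by
    intro i t
    rw [Matrix.mul_assoc, hperm]
  have hK : ∀ (j : Fin r ⊕ Fin s) (t : Fin c₁),
      (Matrix.fromRows R (permMatrix π * X) * Wk) j t
        = (Matrix.fromRows R X * Wk) (σ j) t := by
    intro j t
    simp only [Matrix.mul_apply, hXt]
  have hV : ∀ (j : Fin r ⊕ Fin s) (k : Fin c₂),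
      (Matrix.fromRows R (permMatrix π * X) * Wv) j k
        = (Matrix.fromRows R X * Wv) (σ j) k := by
    intro j k
    simp only [Matrix.mul_apply, hXt]
  have hM : ∀ (i : Fin s) (j : Fin r ⊕ Fin s),
      (((permMatrix π * X) * Wq) * (Matrix.fromRows R (permMatrix π * X) * Wk)ᵀ) i j
        = ((X * Wq) * (Matrix.fromRows R X * Wk)ᵀ) (π i) (σ j) := by
    intro i j
    simp only [Matrix.mul_apply, Matrix.transpose_apply, hQ, hK]
  have hS : ∀ (i : Fin s) (j : Fin r ⊕ Fin s),
      softmax (((permMatrix π * X) * Wq) * (Matrix.fromRows R (permMatrix π * X) * Wk)ᵀ) i j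
        = softmax (((X * Wq)) * (Matrix.fromRows R X * Wk)ᵀ) (π i) (σ j) := by
    intro i j
    simp only [softmax, Matrix.of_apply, hM]
    congr 1
    exact Equiv.sum_comp σ (fun l =>
      Real.exp (((X * Wq) * (Matrix.fromRows R X * Wk)ᵀ) (π i) l))
  ext i k
  simp only [softmaxSharedRefAttn]
  rw [hperm, Matrix.mul_apply, Matrix.mul_apply]
  simp only [hS, hV]
  exact Equiv.sum_comp σ (fun j =>
    softmax ((X * Wq) * (Matrix.fromRows R X * Wk)ᵀ) (π i) j *
      (Matrix.fromRows R X * Wv) j k)
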